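/- arXiv:2605.06704 — 3 statements merged into one kernel-verified Lean document; each statement's English description precedes it below -/
import Mathlib

section
/- Let a: ℝ → ℝ be smooth and nowhere vanishing, and consider the canonical linear form f(x,u,p,q) = a(x)³·u. Then the invariants evaluate to I₁ = 0, I₂ = 0, I₃ = −a(x)³, J₃ = −a(x), I₄ = 0, I₅ = −a′(x)/a(x)², I₇ = 0, Q = 0, and K = (2a(x)a″(x) − 3a′(x)²)/a(x)⁴; consequently all the relative invariants I₆, I₈, I₁₀, I₁₁, I₁₂, I₁₃, I₁₄, I₁₅ vanish identically, and D̂ₓK = K′(x) where K is regarded as a function of x alone. -/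
/-!
Invariants of the third-order ODE `u''' = f(x, u, u', u'')` under contact
transformations, following Cartan's equivalence method.
We write `p = u'`, `q = u''`.
-/

noncomputable section

/-- The real cube root of a real number. -/
def cbrt (y : ℝ) : ℝ := if 0 ≤ y then y ^ ((1 : ℝ)/3) else -((-y) ^ ((1 : ℝ)/3))

/-- Functions of `(x, u, p, q)`. -/
abbrev Fn : Type := ℝ → ℝ → ℝ → ℝ → ℝ

/-- Functions of `(x, u, p)`. -/
abbrev Fn3 : Type := ℝ → ℝ → ℝ → ℝ

/-- Partial derivative in `x` of a function of `(x,u,p,q)`. -/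
def pdx (g : Fn) : Fn := fun x u p q => deriv (fun t => g t u p q) x
/-- Partial derivative in `u` of a function of `(x,u,p,q)`. -/
def pdu (g : Fn) : Fn := fun x u p q => deriv (fun t => g x t p q) u
/-- Partial derivative in `p` of a function of `(x,u,p,q)`. -/
def pdp (g : Fn) : Fn := fun x u p q => deriv (fun t => g x u t q) p
/-- Partial derivative in `q` of a function of `(x,u,p,q)`. -/
def pdq (g : Fn) : Fn := fun x u p q => deriv (fun t => g x u p t) q

/-- Partial derivative in `x` of a function of `(x,u,p)`. -/
def pdx3 (g : Fn3) : Fn3 := fun x u p => deriv (fun t => g t u p) x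
/-- Partial derivative in `u` of a function of `(x,u,p)`. -/
def pdu3 (g : Fn3) : Fn3 := fun x u p => deriv (fun t => g x t p) u
/-- Partial derivative in `p` of a function of `(x,u,p)`. -/
def pdp3 (g : Fn3) : Fn3 := fun x u p => deriv (fun t => g x u t) p

/-- Lift of a function of `(x,u,p)` to a function of `(x,u,p,q)`, constant in `q`. -/
def lift (g : Fn3) : Fn := fun x u p _ => g x u p

/-- The total derivative operator `D̂ₓ = ∂ₓ + p ∂ᵤ + q ∂ₚ + f ∂_q` of the ODE `u''' = f`. -/
def Dhat (f g : Fn) : Fn := fun x u p q =>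
  pdx g x u p q + p * pdu g x u p q + q * pdp g x u p q + f x u p q * pdq g x u p q

/-- `I₁ = −f_q`. -/
def I1 (f : Fn) : Fn := fun x u p q => -(pdq f x u p q)

/-- `I₂ = −(2/9)I₁² − f_p − (1/3)D̂ₓI₁`. -/
def I2 (f : Fn) : Fn := fun x u p q =>
  -(2/9) * (I1 f x u p q)^2 - pdp f x u p q - (1/3) * Dhat f (I1 f) x u p q

/-- `I₃ = −(1/3)I₁I₂ − f_u − (1/2)D̂ₓI₂`. -/
def I3 (f : Fn) : Fn := fun x u p q =>
  -(1/3) * I1 f x u p q * I2 f x u p q - pdu f x u p q - (1/2) * Dhat f (I2 f) x u p q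

/-- `J₃`, the real cube root of `I₃`. -/
def J3 (f : Fn) : Fn := fun x u p q => cbrt (I3 f x u p q)

/-- `I₄ = (J₃)_q`. -/
def I4 (f : Fn) : Fn := pdq (J3 f)

/-- `I₅ = (1/(3J₃²))(I₁J₃ + 3D̂ₓJ₃)`. -/
def I5 (f : Fn) : Fn := fun x u p q =>
  (1 / (3 * (J3 f x u p q)^2)) * (I1 f x u p q * J3 f x u p q + 3 * Dhat f (J3 f) x u p q)

/-- `I₇ = −(I₅)_q J₃²`. -/
def I7 (f : Fn) : Fn := fun x u p q => -(pdq (I5 f) x u p q) * (J3 f x u p q)^2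

/-- `I₉ = 2J₃D̂ₓI₅ − I₂ + J₃²I₅²`. -/
def I9 (f : Fn) : Fn := fun x u p q =>
  2 * J3 f x u p q * Dhat f (I5 f) x u p q - I2 f x u p q
    + (J3 f x u p q)^2 * (I5 f x u p q)^2

/-- `K = I₉/J₃²`. -/
def Kinv (f : Fn) : Fn := fun x u p q => I9 f x u p q / (J3 f x u p q)^2

/-- `Q = −(I₁I₇ + 3J₃²(I₅)_p + 3(J₃)_u − 3J₃I₄D̂ₓI₅)/(3J₃)`. -/
def Qinv (f : Fn) : Fn := fun x u p q =>
  -(I1 f x u p q * I7 f x u p q + 3 * (J3 f x u p q)^2 * pdp (I5 f) x u p q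
      + 3 * pdu (J3 f) x u p q
      - 3 * J3 f x u p q * I4 f x u p q * Dhat f (I5 f) x u p q)
    / (3 * J3 f x u p q)

/-- `I₆ = (2/3)(J₃)_q I₁ − (1/3)(I₁)_q J₃ − 2(J₃)_p + 2J₃I₄I₅`. -/
def I6 (f : Fn) : Fn := fun x u p q =>
  (2/3) * pdq (J3 f) x u p q * I1 f x u p q - (1/3) * pdq (I1 f) x u p q * J3 f x u p q
    - 2 * pdp (J3 f) x u p q + 2 * J3 f x u p q * I4 f x u p q * I5 f x u p q

/-- `I₈ = (I₄)_q`. -/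
def I8 (f : Fn) : Fn := pdq (I4 f)

/-- `I₁₀ = I₄D̂ₓI₇ − J₃(I₇)_p + J₃²(I₄/J₃)_u`. -/
def I10 (f : Fn) : Fn := fun x u p q =>
  I4 f x u p q * Dhat f (I7 f) x u p q - J3 f x u p q * pdp (I7 f) x u p q
    + (J3 f x u p q)^2 *
      pdu (fun x' u' p' q' => I4 f x' u' p' q' / J3 f x' u' p' q') x u p q

/-- `I₁₁ = (J₃)_u − D̂ₓI₇`. -/
def I11 (f : Fn) : Fn := fun x u p q =>
  pdu (J3 f) x u p q - Dhat f (I7 f) x u p q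

/-- `I₁₂`. -/
def I12 (f : Fn) : Fn := fun x u p q =>
  6 * I1 f x u p q * J3 f x u p q *
      (I5 f x u p q * I7 f x u p q - I4 f x u p q * Dhat f (I5 f) x u p q)
    - 18 * (J3 f x u p q)^3 * I4 f x u p q
    + 6 * pdp (I5 f) x u p q * I1 f x u p q * (J3 f x u p q)^2
    - 18 * I2 f x u p q * J3 f x u p q * I4 f x u p q * I5 f x u p q
    - 18 * J3 f x u p q * I7 f x u p q * Dhat f (I5 f) x u p q
    + 18 * (J3 f x u p q)^2 * pdu (I5 f) x u p q
    + 18 * I2 f x u p q * Dhat f (I4 f) x u p q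
    + 2 * (I1 f x u p q)^2 * I7 f x u p q
    - 9 * pdp (I2 f) x u p q * J3 f x u p q
    + 6 * (J3 f x u p q)^2 *
        pdu (fun x' u' p' q' => I1 f x' u' p' q' / J3 f x' u' p' q') x u p q
    + 36 * I2 f x u p q * I7 f x u p q

/-- `I₁₃ = (J₃I₄I₅ − I₇)D̂ₓK + J₃K_u − J₃²I₅K_p`. -/
def I13 (f : Fn) : Fn := fun x u p q =>
  (J3 f x u p q * I4 f x u p q * I5 f x u p q - I7 f x u p q) * Dhat f (Kinv f) x u p q
    + J3 f x u p q * pdu (Kinv f) x u p q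
    - (J3 f x u p q)^2 * I5 f x u p q * pdp (Kinv f) x u p q

/-- `I₁₄ = K_q`. -/
def I14 (f : Fn) : Fn := pdq (Kinv f)

/-- `I₁₅ = I₄D̂ₓK − J₃K_p`. -/
def I15 (f : Fn) : Fn := fun x u p q =>
  I4 f x u p q * Dhat f (Kinv f) x u p q - J3 f x u p q * pdp (Kinv f) x u p q


lemma cbrt_cube (y : ℝ) : cbrt (y ^ 3) = y := by
  rcases le_or_gt 0 y with hy | hy
  · have h3 : (0:ℝ) ≤ y ^ 3 := by positivity
    rw [cbrt, if_pos h3,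
      show (y:ℝ)^3 = y ^ ((3:ℕ):ℝ) from (Real.rpow_natCast y 3).symm,
      ← Real.rpow_mul hy]
    norm_num
  · have h3 : ¬ (0:ℝ) ≤ y ^ 3 := by
      push_neg; nlinarith [pow_pos (neg_pos.mpr hy) 3]
    have hy' : (0:ℝ) ≤ -y := by linarith
    rw [cbrt, if_neg h3, show -(y^3) = (-y)^3 by ring,
      show ((-y):ℝ)^3 = (-y) ^ ((3:ℕ):ℝ) from (Real.rpow_natCast _ 3).symm,
      ← Real.rpow_mul hy']
    norm_num

lemma Dhat_xonly (f : Fn) (g : ℝ → ℝ) (x u p q : ℝ) :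
    Dhat f (fun x _ _ _ => g x) x u p q = deriv g x := by
  simp [Dhat, pdx, pdu, pdp, pdq]

/-- For the canonical linear form `f(x,u,p,q) = a(x)³·u` with `a` smooth
and nowhere vanishing, the invariants evaluate to `I₁ = 0, I₂ = 0, I₃ = −a³, J₃ = −a,
I₄ = 0, I₅ = −a'/a², I₇ = 0, Q = 0, K = (2aa'' − 3a'²)/a⁴`; consequently all the relative
invariants `I₆, I₈, I₁₀, I₁₁, I₁₂, I₁₃, I₁₄, I₁₅` vanish identically, and
`D̂ₓK = K'(x)` where `K` is regarded as a function of `x` alone. -/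
theorem invariants_of_linear_fourDim (a : ℝ → ℝ)
    (ha : ContDiff ℝ (⊤ : ℕ∞) a) (ha0 : ∀ t, a t ≠ 0)
    (f : Fn) (hfdef : f = fun x u _ _ => (a x)^3 * u)
    (Kfun : ℝ → ℝ)
    (hKfun : Kfun = fun x =>
      (2 * a x * deriv (deriv a) x - 3 * (deriv a x)^2) / (a x)^4) :
    ∀ x u p q : ℝ,
      I1 f x u p q = 0 ∧
      I2 f x u p q = 0 ∧
      I3 f x u p q = -(a x)^3 ∧
      J3 f x u p q = -(a x) ∧
      I4 f x u p q = 0 ∧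
      I5 f x u p q = -(deriv a x) / (a x)^2 ∧
      I7 f x u p q = 0 ∧
      Qinv f x u p q = 0 ∧
      Kinv f x u p q = Kfun x ∧
      I6 f x u p q = 0 ∧
      I8 f x u p q = 0 ∧
      I10 f x u p q = 0 ∧
      I11 f x u p q = 0 ∧
      I12 f x u p q = 0 ∧
      I13 f x u p q = 0 ∧
      I14 f x u p q = 0 ∧
      I15 f x u p q = 0 ∧
      Dhat f (Kinv f) x u p q = deriv Kfun x := by
  subst hfdef
  set f : Fn := fun x u _ _ => (a x)^3 * u with hf
  have hdiffa : Differentiable ℝ a := ha.differentiable (by norm_num)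
  have ha' : ContDiff ℝ (⊤ : ℕ∞) (deriv a) := (contDiff_infty_iff_deriv.mp ha).2
  have hdiffa' : Differentiable ℝ (deriv a) := ha'.differentiable (by norm_num)
  have h1 : I1 f = fun _ _ _ _ => 0 := by
    funext x u p q; simp [I1, pdq, hf]
  have h2 : I2 f = fun _ _ _ _ => 0 := by
    funext x u p q; simp only [I2, h1]; simp [Dhat, pdx, pdu, pdp, pdq, hf]
  have hpduf : ∀ x u p q : ℝ, pdu f x u p q = (a x)^3 := by
    intro x u p q
    simpa [pdu, hf] using ((hasDerivAt_id u).const_mul ((a x)^3)).deriv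
  have h3 : I3 f = fun x _ _ _ => -(a x)^3 := by
    funext x u p q
    simp [I3, Dhat, pdx, pdu, pdp, pdq, h1, h2, hpduf x u p q]
    exact hpduf x u p q
  have hJ : J3 f = fun x _ _ _ => -(a x) := by
    funext x u p q
    rw [J3, congrFun (congrFun (congrFun (congrFun h3 x) u) p) q,
      show -(a x)^3 = (-(a x))^3 by ring, cbrt_cube]
  have h4 : I4 f = fun _ _ _ _ => 0 := by
    funext x u p q; simp [I4, pdq, hJ]
  have h5 : I5 f = fun x _ _ _ => -(deriv a x) / (a x)^2 := by
    funext x u p q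
    rw [I5, h1, hJ, Dhat_xonly f (fun t => -(a t)) x u p q]
    simp only [deriv.fun_neg]
    field_simp [ha0 x]
    ring
  have h7 : I7 f = fun _ _ _ _ => 0 := by
    funext x u p q; simp [I7, pdq, h5]
  have hg5 : ∀ x : ℝ, HasDerivAt (fun t => -(deriv a t) / (a t)^2)
      ((-(deriv (deriv a) x) * (a x)^2 - (-(deriv a x)) * (2 * a x * deriv a x))
        / ((a x)^2)^2) x := by
    intro x
    have hn : HasDerivAt (fun t => -(deriv a t)) (-(deriv (deriv a) x)) x :=
      ((hdiffa' x).hasDerivAt).neg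
    have hd : HasDerivAt (fun t => (a t)^2) (2 * a x * deriv a x) x := by
      simpa [mul_comm] using ((hdiffa x).hasDerivAt.fun_pow 2)
    exact hn.div hd (pow_ne_zero 2 (ha0 x))
  have hD5 : ∀ x u p q : ℝ, Dhat f (I5 f) x u p q
      = ((-(deriv (deriv a) x) * (a x)^2 - (-(deriv a x)) * (2 * a x * deriv a x))
        / ((a x)^2)^2) := by
    intro x u p q
    rw [h5, Dhat_xonly f (fun t => -(deriv a t) / (a t)^2) x u p q, (hg5 x).deriv]
  have hK : Kinv f = fun x _ _ _ => Kfun x := by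
    funext x u p q
    rw [Kinv, I9, hD5 x u p q, h2, hJ, h5, hKfun]
    field_simp [ha0 x]
    ring
  have hQ : ∀ x u p q : ℝ, Qinv f x u p q = 0 := by
    intro x u p q
    simp [Qinv, h1, h4, h7, h5, hJ, pdp, pdu]
  have hI6 : ∀ x u p q : ℝ, I6 f x u p q = 0 := by
    intro x u p q
    simp [I6, h1, h4, hJ, pdq, pdp]
  have hI8 : ∀ x u p q : ℝ, I8 f x u p q = 0 := by
    intro x u p q
    simp [I8, h4, pdq]
  have hI10 : ∀ x u p q : ℝ, I10 f x u p q = 0 := by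
    intro x u p q
    simp [I10, h4, h7, hJ, Dhat, pdx, pdu, pdp, pdq]
  have hI11 : ∀ x u p q : ℝ, I11 f x u p q = 0 := by
    intro x u p q
    simp [I11, h7, hJ, Dhat, pdx, pdu, pdp, pdq]
  have hI12 : ∀ x u p q : ℝ, I12 f x u p q = 0 := by
    intro x u p q
    simp [I12, h1, h2, h4, h5, h7, hJ, Dhat, pdx, pdu, pdp, pdq]
  have hI13 : ∀ x u p q : ℝ, I13 f x u p q = 0 := by
    intro x u p q
    simp [I13, h4, h7, hJ, hK, pdu, pdp]
  have hI14 : ∀ x u p q : ℝ, I14 f x u p q = 0 := by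
    intro x u p q
    simp [I14, hK, pdq]
  have hI15 : ∀ x u p q : ℝ, I15 f x u p q = 0 := by
    intro x u p q
    simp [I15, h4, hK, pdp]
  have hDK : ∀ x u p q : ℝ, Dhat f (Kinv f) x u p q = deriv Kfun x := by
    intro x u p q
    rw [hK]; exact Dhat_xonly f Kfun x u p q
  intro x u p q
  exact ⟨congrFun (congrFun (congrFun (congrFun h1 x) u) p) q,
    congrFun (congrFun (congrFun (congrFun h2 x) u) p) q,
    congrFun (congrFun (congrFun (congrFun h3 x) u) p) q,
    congrFun (congrFun (congrFun (congrFun hJ x) u) p) q,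
    congrFun (congrFun (congrFun (congrFun h4 x) u) p) q,
    congrFun (congrFun (congrFun (congrFun h5 x) u) p) q,
    congrFun (congrFun (congrFun (congrFun h7 x) u) p) q,
    hQ x u p q,
    congrFun (congrFun (congrFun (congrFun hK x) u) p) q,
    hI6 x u p q, hI8 x u p q, hI10 x u p q, hI11 x u p q,
    hI12 x u p q, hI13 x u p q, hI14 x u p q, hI15 x u p q, hDK x u p q⟩


end
end

section
/- Let α be a real constant with α(α−3)(2α−3) ≠ 0 and set m := (2α³−9α²+9α)^{1/3} (real cube root). The map (x̄,ū,p̄) = (φ,ψ,χ) on U = {(x,u,p) : p > 0} given by φ(x,u,p) = −(m/3)·ln p, ψ(x,u,p) = (u − xp)·p^{α/3−1}, χ(x,u,p) = ((αpx − αu + 3u)/m)·p^{α/3−1} is a proper contact transformation: its Jacobian determinant equals p^{2α/3−2} ≠ 0, and it satisfies the contact conditions ψ_p − χφ_p = 0, ψ_u − χφ_u = λ, ψ_x − χφ_x = −pλ with contact multiplier λ(x,u,p) = p^{α/3−1}. -/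
/-!
Invariants of the third-order ODE `u''' = f(x, u, u', u'')` under contact
transformations, following Cartan's equivalence method.
We write `p = u'`, `q = u''`.
-/

noncomputable section

/-- The Jacobian determinant of the map `(x,u,p) ↦ (φ, ψ, χ)`. -/
def jac3 (φ ψ χ : Fn3) : Fn3 := fun x u p =>
  Matrix.det !![pdx3 φ x u p, pdu3 φ x u p, pdp3 φ x u p;
                pdx3 ψ x u p, pdu3 ψ x u p, pdp3 ψ x u p;
                pdx3 χ x u p, pdu3 χ x u p, pdp3 χ x u p]

/-- A contact transformation `(x̄,ū,p̄) = (φ(x,u,p), ψ(x,u,p), χ(x,u,p))` on an open set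
`U ⊆ ℝ³`: a smooth map with nowhere-vanishing Jacobian determinant, together with a
nowhere-vanishing contact multiplier `lam` such that `dψ − χ dφ = lam (du − p dx)`. -/
structure IsContactTransformOn (U : Set (ℝ × ℝ × ℝ)) (φ ψ χ lam : Fn3) : Prop where
  isOpen : IsOpen U
  smooth : ContDiffOn ℝ (⊤ : ℕ∞) (fun v : ℝ × ℝ × ℝ =>
      (φ v.1 v.2.1 v.2.2, ψ v.1 v.2.1 v.2.2, χ v.1 v.2.1 v.2.2)) U
  jac_ne : ∀ x u p, (x, u, p) ∈ U → jac3 φ ψ χ x u p ≠ 0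
  lam_ne : ∀ x u p, (x, u, p) ∈ U → lam x u p ≠ 0
  contact_p : ∀ x u p, (x, u, p) ∈ U → pdp3 ψ x u p - χ x u p * pdp3 φ x u p = 0
  contact_u : ∀ x u p, (x, u, p) ∈ U → pdu3 ψ x u p - χ x u p * pdu3 φ x u p = lam x u p
  contact_x : ∀ x u p, (x, u, p) ∈ U → pdx3 ψ x u p - χ x u p * pdx3 φ x u p = -p * lam x u p

/-- `u` is a smooth solution of the third-order ODE `u''' = f(x,u,u',u'')` on `I`. -/
def SolvesODE3 (f : Fn) (I : Set ℝ) (u : ℝ → ℝ) : Prop :=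
  ContDiffOn ℝ (⊤ : ℕ∞) u I ∧
  ∀ x ∈ I, deriv (deriv (deriv u)) x = f x (u x) (deriv u x) (deriv (deriv u) x)

/-- The ODE `u''' = f(x,u,u',u'')` is equivalent to `ū''' = f̄(x̄,ū,ū',ū'')` under the
contact transformation `(φ, ψ, χ)` on `U`: for every smooth solution `u` of the first
equation, defined on an open interval, whose prolonged graph `(x, u(x), u'(x))` lies in `U`
and for which `x̄(x) := φ(x,u(x),u'(x))` has nonvanishing derivative, the function `v` of
`x̄` defined by `v(x̄(x)) = ψ(x,u(x),u'(x))` is a smooth solution of the second equation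
and satisfies `dv/dx̄ = χ(x,u(x),u'(x))`. -/
def ContactEquivOn (f fbar : Fn) (U : Set (ℝ × ℝ × ℝ)) (φ ψ χ : Fn3) : Prop :=
  ∀ (I : Set ℝ) (u : ℝ → ℝ), IsOpen I → I.OrdConnected →
    SolvesODE3 f I u →
    (∀ x ∈ I, (x, u x, deriv u x) ∈ U) →
    (∀ x ∈ I, deriv (fun t => φ t (u t) (deriv u t)) x ≠ 0) →
    ∃ v : ℝ → ℝ,
      ContDiffOn ℝ (⊤ : ℕ∞) v ((fun t => φ t (u t) (deriv u t)) '' I) ∧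
      (∀ x ∈ I, v (φ x (u x) (deriv u x)) = ψ x (u x) (deriv u x)) ∧
      (∀ x ∈ I, deriv v (φ x (u x) (deriv u x)) = χ x (u x) (deriv u x)) ∧
      (∀ y ∈ (fun t => φ t (u t) (deriv u t)) '' I,
        deriv (deriv (deriv v)) y = fbar y (v y) (deriv v y) (deriv (deriv v) y))

lemma cbrt_ne_zero {y : ℝ} (hy : y ≠ 0) : cbrt y ≠ 0 := by
  unfold cbrt
  split_ifs with h
  · exact (Real.rpow_pos_of_pos (lt_of_le_of_ne h (Ne.symm hy)) _).ne'
  · have : 0 < -y := by linarith [not_le.mp h]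
    simpa using (Real.rpow_pos_of_pos this ((1:ℝ)/3)).ne'

/-- For `α(α−3)(2α−3) ≠ 0` and `m` the real cube root of `2α³−9α²+9α`,
the map `(x̄,ū,p̄) = (−(m/3)ln p, (u−xp)p^{α/3−1}, ((αpx−αu+3u)/m)p^{α/3−1})` on
`U = {p > 0}` is a proper contact transformation: its Jacobian determinant equals
`p^{2α/3−2} ≠ 0` and the contact conditions hold with multiplier `λ = p^{α/3−1}`. -/
theorem example1_is_contact_transformation (α m : ℝ)
    (hα : α * (α - 3) * (2*α - 3) ≠ 0)
    (hm : m = cbrt (2*α^3 - 9*α^2 + 9*α))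
    (U : Set (ℝ × ℝ × ℝ)) (hU : U = {v : ℝ × ℝ × ℝ | 0 < v.2.2})
    (φ : Fn3) (hφ : φ = fun _ _ p => -(m/3) * Real.log p)
    (ψ : Fn3) (hψ : ψ = fun x u p => (u - x*p) * p ^ (α/3 - 1))
    (χ : Fn3) (hχ : χ = fun x u p => ((α*p*x - α*u + 3*u) / m) * p ^ (α/3 - 1))
    (lam : Fn3) (hlam : lam = fun _ _ p => p ^ (α/3 - 1)) :
    IsContactTransformOn U φ ψ χ lam ∧
    ∀ x u p : ℝ, 0 < p →
      jac3 φ ψ χ x u p = p ^ (2*α/3 - 2) ∧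
      p ^ (2*α/3 - 2) ≠ 0 ∧
      pdp3 ψ x u p - χ x u p * pdp3 φ x u p = 0 ∧
      pdu3 ψ x u p - χ x u p * pdu3 φ x u p = lam x u p ∧
      pdx3 ψ x u p - χ x u p * pdx3 φ x u p = -p * lam x u p := by
  subst hU hφ hψ hχ hlam
  have hm0 : m ≠ 0 := by
    rw [hm]; apply cbrt_ne_zero; intro h; apply hα; nlinarith [h]
  have key : ∀ x u p : ℝ, 0 < p →
      jac3 (fun _ _ p => -(m/3) * Real.log p) (fun x u p => (u - x*p) * p ^ (α/3 - 1))
        (fun x u p => ((α*p*x - α*u + 3*u) / m) * p ^ (α/3 - 1)) x u p = p ^ (2*α/3 - 2) ∧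
      p ^ (2*α/3 - 2) ≠ 0 ∧
      pdp3 (fun x u p => (u - x*p) * p ^ (α/3 - 1)) x u p
        - ((α*p*x - α*u + 3*u) / m) * p ^ (α/3 - 1)
          * pdp3 (fun _ _ p => -(m/3) * Real.log p) x u p = 0 ∧
      pdu3 (fun x u p => (u - x*p) * p ^ (α/3 - 1)) x u p
        - ((α*p*x - α*u + 3*u) / m) * p ^ (α/3 - 1)
          * pdu3 (fun _ _ p => -(m/3) * Real.log p) x u p = p ^ (α/3 - 1) ∧
      pdx3 (fun x u p => (u - x*p) * p ^ (α/3 - 1)) x u p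
        - ((α*p*x - α*u + 3*u) / m) * p ^ (α/3 - 1)
          * pdx3 (fun _ _ p => -(m/3) * Real.log p) x u p = -p * p ^ (α/3 - 1) := by
    intro x u p hp
    have hφx : pdx3 (fun _ _ p => -(m/3) * Real.log p) x u p = 0 := by simp [pdx3]
    have hφu : pdu3 (fun _ _ p => -(m/3) * Real.log p) x u p = 0 := by simp [pdu3]
    have hφp : pdp3 (fun _ _ p => -(m/3) * Real.log p) x u p = -(m/3) * p⁻¹ := by
      unfold pdp3
      exact ((Real.hasDerivAt_log hp.ne').const_mul (-(m/3))).deriv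
    have hψp : pdp3 (fun x u p => (u - x*p) * p ^ (α/3 - 1)) x u p
        = (-x) * p ^ (α/3-1) + (u - x*p) * ((α/3-1) * p ^ (α/3-1-1)) := by
      unfold pdp3
      have h1 : HasDerivAt (fun t : ℝ => u - x*t) (-x) p := by
        simpa using ((hasDerivAt_id p).const_mul x).const_sub u
      exact (h1.mul (Real.hasDerivAt_rpow_const (Or.inl hp.ne'))).deriv
    have hψu : pdu3 (fun x u p => (u - x*p) * p ^ (α/3 - 1)) x u p = p ^ (α/3-1) := by
      unfold pdu3
      simpa using (((hasDerivAt_id u).sub_const (x*p)).mul_const (p ^ (α/3-1))).deriv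
    have hψx : pdx3 (fun x u p => (u - x*p) * p ^ (α/3 - 1)) x u p = -p * p ^ (α/3-1) := by
      unfold pdx3
      have h1 : HasDerivAt (fun t : ℝ => u - t*p) (-p) x := by
        simpa using ((hasDerivAt_id x).mul_const p).const_sub u
      simpa using (h1.mul_const (p ^ (α/3-1))).deriv
    have hχx : pdx3 (fun x u p => ((α*p*x - α*u + 3*u) / m) * p ^ (α/3 - 1)) x u p
        = (α*p/m) * p ^ (α/3-1) := by
      unfold pdx3
      have h1 : HasDerivAt (fun t : ℝ => (α*p*t - α*u + 3*u)/m) (α*p/m) x := by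
        have h2 : HasDerivAt (fun t : ℝ => α*p*t - α*u + 3*u) (α*p) x := by
          simpa using (((hasDerivAt_id x).const_mul (α*p)).sub_const (α*u)).add_const (3*u)
        exact h2.div_const m
      exact (h1.mul_const (p ^ (α/3-1))).deriv
    have hχu : pdu3 (fun x u p => ((α*p*x - α*u + 3*u) / m) * p ^ (α/3 - 1)) x u p
        = ((3-α)/m) * p ^ (α/3-1) := by
      unfold pdu3
      have h1 : HasDerivAt (fun t : ℝ => (α*p*x - α*t + 3*t)/m) ((3-α)/m) u := by
        have h2 : HasDerivAt (fun t : ℝ => α*p*x - α*t + 3*t) (3-α) u := by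
          have := ((hasDerivAt_const u (α*p*x)).sub ((hasDerivAt_id u).const_mul α)).add
            ((hasDerivAt_id u).const_mul 3)
          exact this.congr_deriv (by ring)
        exact h2.div_const m
      exact (h1.mul_const (p ^ (α/3-1))).deriv
    have hχp : pdp3 (fun x u p => ((α*p*x - α*u + 3*u) / m) * p ^ (α/3 - 1)) x u p
        = (α*x/m) * p ^ (α/3-1) + ((α*p*x - α*u + 3*u)/m) * ((α/3-1) * p ^ (α/3-1-1)) := by
      unfold pdp3
      have h1 : HasDerivAt (fun t : ℝ => (α*t*x - α*u + 3*u)/m) (α*x/m) p := by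
        have h2 : HasDerivAt (fun t : ℝ => α*t*x - α*u + 3*u) (α*x) p := by
          simpa using ((((hasDerivAt_id p).const_mul α).mul_const x).sub_const (α*u)).add_const
            (3*u)
        exact h2.div_const m
      exact (h1.mul (Real.hasDerivAt_rpow_const (Or.inl hp.ne'))).deriv
    have hsub : p ^ (α/3-1-1) = p ^ (α/3-1) / p := by
      rw [Real.rpow_sub hp, Real.rpow_one]
    have hdbl : p ^ (2*α/3 - 2) = p ^ (α/3-1) * p ^ (α/3-1) := by
      rw [show (2*α/3-2 : ℝ) = (α/3-1)+(α/3-1) by ring, Real.rpow_add hp]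
    refine ⟨?_, ?_, ?_, ?_, ?_⟩
    · unfold jac3
      rw [Matrix.det_fin_three]
      rw [hφx, hφu, hφp, hψx, hψu, hψp, hχx, hχu, hχp, hsub, hdbl]
      simp only [Matrix.of_apply, Matrix.cons_val', Matrix.cons_val_zero, Matrix.cons_val_one,
        Matrix.cons_val_two, Matrix.empty_val', Matrix.cons_val_fin_one, Matrix.vecHead,
        Matrix.vecTail, Function.comp_apply, Fin.succ_zero_eq_one, Fin.succ_one_eq_two,
        Matrix.cons_val_succ]
      field_simp
      ring
    · rw [hdbl]
      positivity
    · rw [hψp, hφp, hsub]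
      field_simp
      ring
    · rw [hψu, hφu]; ring
    · rw [hψx, hφx]; ring
  constructor
  · constructor
    · exact isOpen_lt continuous_const (continuous_snd.comp continuous_snd)
    · intro v hv
      have hp : 0 < v.2.2 := hv
      apply ContDiffAt.contDiffWithinAt
      have hproj : ContDiffAt ℝ (⊤ : ℕ∞) (fun w : ℝ × ℝ × ℝ => w.2.2) v :=
        (contDiff_snd.comp contDiff_snd).contDiffAt
      have hrpow : ContDiffAt ℝ (⊤ : ℕ∞) (fun w : ℝ × ℝ × ℝ => w.2.2 ^ (α/3-1)) v :=
        (Real.contDiffAt_rpow_const_of_ne (p := α/3-1) hp.ne').comp (g := fun y : ℝ => y ^ (α/3-1)) v hproj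
      refine ContDiffAt.prodMk ?_ (ContDiffAt.prodMk ?_ ?_)
      · exact contDiffAt_const.mul ((Real.contDiffAt_log.mpr hp.ne').comp (g := Real.log) v hproj)
      · exact (((contDiff_fst.comp contDiff_snd).contDiffAt).sub
          (contDiff_fst.contDiffAt.mul hproj)).mul hrpow
      · exact ((((contDiffAt_const.mul hproj).mul contDiff_fst.contDiffAt).sub
            (contDiffAt_const.mul (contDiff_fst.comp contDiff_snd).contDiffAt)).add
            (contDiffAt_const.mul (contDiff_fst.comp contDiff_snd).contDiffAt)).div_const m
          |>.mul hrpow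
    · intro x u p hpU
      have hp : (0:ℝ) < p := hpU
      rw [(key x u p hp).1]
      exact (key x u p hp).2.1
    · intro x u p hpU
      exact (Real.rpow_pos_of_pos hpU _).ne'
    · intro x u p hpU
      exact (key x u p hpU).2.2.1
    · intro x u p hpU
      exact (key x u p hpU).2.2.2.1
    · intro x u p hpU
      exact (key x u p hpU).2.2.2.2
  · exact key


end
end

section
/- The map (x̄,ū,p̄) = (p, u − xp, −x) on ℝ³ is a contact transformation with contact multiplier λ ≡ 1 and Jacobian determinant equal to 1. Moreover, if u: I → ℝ is a smooth solution of u‴ = −x·(u′)⁴(u″)³ + u·(u′)³(u″)³ on an open interval I with u″ nowhere vanishing on I, then t ↦ u′ is a diffeomorphism of I onto its image, and the function v defined on that image by v(u′(x)) = u(x) − x·u′(x) is a smooth solution of the linear equation v‴(t) = t³·v(t). -/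
/-!
Invariants of the third-order ODE `u''' = f(x, u, u', u'')` under contact
transformations, following Cartan's equivalence method.
We write `p = u'`, `q = u''`.
-/

noncomputable section

/-- The map `(x̄,ū,p̄) = (p, u − xp, −x)` on `ℝ³` is a contact
transformation with multiplier `λ ≡ 1` and Jacobian determinant `1`.  Moreover, if `u` is
a smooth solution of `u''' = −x·(u')⁴(u'')³ + u·(u')³(u'')³` on an open interval `I` with
`u''` nowhere vanishing, then `u'` is a diffeomorphism of `I` onto its image and the
function `v` defined on that image by `v(u'(x)) = u(x) − x·u'(x)` is a smooth solution of
`v'''(t) = t³·v(t)`. -/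
theorem example2_linearizes
    (φ ψ χ lam : Fn3)
    (hφ : φ = fun _ _ p => p) (hψ : ψ = fun x u p => u - x*p)
    (hχ : χ = fun x _ _ => -x) (hlam : lam = fun _ _ _ => 1) :
    (IsContactTransformOn Set.univ φ ψ χ lam ∧
      ∀ x u p : ℝ, jac3 φ ψ χ x u p = 1) ∧
    ∀ (I : Set ℝ), IsOpen I → I.OrdConnected →
      ∀ u : ℝ → ℝ,
        SolvesODE3 (fun x' u' p' q' => -x' * p'^4 * q'^3 + u' * p'^3 * q'^3) I u →
        (∀ x ∈ I, deriv (deriv u) x ≠ 0) →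
        (Set.InjOn (deriv u) I ∧
         IsOpen (deriv u '' I) ∧
         (∃ w : ℝ → ℝ, ContDiffOn ℝ (⊤ : ℕ∞) w (deriv u '' I) ∧
            ∀ x ∈ I, w (deriv u x) = x) ∧
         ∃ v : ℝ → ℝ,
           ContDiffOn ℝ (⊤ : ℕ∞) v (deriv u '' I) ∧
           (∀ x ∈ I, v (deriv u x) = u x - x * deriv u x) ∧
           ∀ t ∈ deriv u '' I, deriv (deriv (deriv v)) t = t^3 * v t) := by
  subst hφ hψ hχ hlam
  constructor
  · have hj : ∀ x u p : ℝ, jac3 (fun _ _ p => p) (fun x u p => u - x*p)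
        (fun x _ _ => -x) x u p = 1 := by
      intro x u p
      simp [jac3, pdx3, pdu3, pdp3, Matrix.det_fin_three]
    refine ⟨⟨isOpen_univ, ?_, fun x u p _ => by rw [hj]; norm_num,
      fun _ _ _ _ => one_ne_zero, ?_, ?_, ?_⟩, hj⟩
    · have : ContDiff ℝ (⊤:ℕ∞) (fun v : ℝ × ℝ × ℝ => (v.2.2, v.2.1 - v.1*v.2.2, -v.1)) := by
        fun_prop
      exact this.contDiffOn
    · intro x u p _
      have hd : deriv (fun t => u - x * t) p = -x := by
        simpa using (((hasDerivAt_id p).const_mul x).const_sub u).deriv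
      simp [pdp3, hd]
    · intro x u p _
      simp [pdu3]
    · intro x u p _
      simp [pdx3]
  · rintro I hIo hIoc u ⟨husm, hode⟩ hq
    have hgsm : ContDiffOn ℝ (⊤:ℕ∞) (deriv u) I := husm.deriv_of_isOpen hIo (by exact_mod_cast le_top)
    have hg2sm : ContDiffOn ℝ (⊤:ℕ∞) (deriv (deriv u)) I := hgsm.deriv_of_isOpen hIo (by exact_mod_cast le_top)
    -- sign of second derivative
    have hsign : (∀ x ∈ I, 0 < deriv (deriv u) x) ∨ (∀ x ∈ I, deriv (deriv u) x < 0) := by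
      by_contra h
      push_neg at h
      obtain ⟨⟨a, ha, ha'⟩, ⟨b, hb, hb'⟩⟩ := h
      have hab : Set.uIcc a b ⊆ I := hIoc.uIcc_subset ha hb
      have h0 : (0:ℝ) ∈ Set.uIcc (deriv (deriv u) a) (deriv (deriv u) b) := by
        have ha2 : deriv (deriv u) a < 0 := lt_of_le_of_ne ha' (hq a ha)
        have hb2 : 0 < deriv (deriv u) b := lt_of_le_of_ne (by linarith [hb']) (Ne.symm (hq b hb))
        exact Set.mem_uIcc.2 (Or.inl ⟨le_of_lt ha2, le_of_lt hb2⟩)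
      obtain ⟨c, hc, hc0⟩ := intermediate_value_uIcc (hg2sm.continuousOn.mono hab) h0
      exact hq c (hab hc) hc0
    have hconv : Convex ℝ I := hIoc.convex
    have hinj : Set.InjOn (deriv u) I := by
      rcases hsign with hs | hs
      · exact (strictMonoOn_of_deriv_pos hconv hgsm.continuousOn
          (fun x hx => hs x ((hIo.interior_eq ▸ hx)))).injOn
      · exact (strictAntiOn_of_deriv_neg hconv hgsm.continuousOn
          (fun x hx => hs x ((hIo.interior_eq ▸ hx)))).injOn
    have hstrict : ∀ x ∈ I, HasStrictDerivAt (deriv u) (deriv (deriv u) x) x := fun x hx =>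
      (hgsm.contDiffAt (hIo.mem_nhds hx)).hasStrictDerivAt (by simp)
    have hopen : IsOpen (deriv u '' I) := by
      rw [isOpen_iff_mem_nhds]
      rintro t ⟨x, hx, rfl⟩
      rw [← (hstrict x hx).map_nhds_eq (hq x hx)]
      exact Filter.image_mem_map (hIo.mem_nhds hx)
    set w : ℝ → ℝ := Function.invFunOn (deriv u) I with hw
    have hwleft : ∀ x ∈ I, w (deriv u x) = x := fun x hx => hinj.leftInvOn_invFunOn hx
    have hwmem : ∀ t ∈ deriv u '' I, w t ∈ I := by
      rintro t ⟨x, hx, rfl⟩; rw [hwleft x hx]; exact hx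
    have hwright : ∀ t ∈ deriv u '' I, deriv u (w t) = t := by
      rintro t ⟨x, hx, rfl⟩; rw [hwleft x hx]
    -- smoothness of w
    have hwT : ∀ t ∈ deriv u '' I, ContDiffAt ℝ (⊤:ℕ∞) w t := by
      rintro t ⟨x, hx, rfl⟩
      have hcd : ContDiffAt ℝ (⊤:ℕ∞) (deriv u) x := hgsm.contDiffAt (hIo.mem_nhds hx)
      have hq0 : deriv (deriv u) x ≠ 0 := hq x hx
      have hder : HasFDerivAt (deriv u)
          (↑(ContinuousLinearEquiv.unitsEquivAut ℝ (Units.mk0 _ hq0)) : ℝ →L[ℝ] ℝ) x :=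
        ((hcd.differentiableAt (by simp)).hasDerivAt).hasFDerivAt_equiv hq0
      have hL : ContDiffAt ℝ (⊤:ℕ∞) (hcd.localInverse hder (by simp)) (deriv u x) :=
        hcd.to_localInverse hder (by simp)
      have hev : ∀ᶠ y in nhds (deriv u x), w y = hcd.localInverse hder (by simp) y :=
        (hcd.hasStrictFDerivAt' hder (by simp)).localInverse_unique
          (Filter.eventually_of_mem (hIo.mem_nhds hx) (fun z hz => hwleft z hz))
      exact hL.congr_of_eventuallyEq hev
    have hwderiv : ∀ t ∈ deriv u '' I, HasStrictDerivAt w (deriv (deriv u) (w t))⁻¹ t := by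
      intro t ht
      have : HasStrictDerivAt (deriv u) (deriv (deriv u) (w t)) (w t) := hstrict _ (hwmem t ht)
      exact HasStrictDerivAt.of_local_left_inverse ((hwT t ht).continuousAt) this
        (hq _ (hwmem t ht))
        (Filter.eventually_of_mem (hopen.mem_nhds ht) (fun z hz => hwright z hz))
    refine ⟨hinj, hopen, ⟨w, fun t ht => (hwT t ht).contDiffWithinAt, hwleft⟩, ?_⟩
    refine ⟨fun t => u (w t) - w t * t, ?_, ?_, ?_⟩
    · intro t ht
      exact (((husm.contDiffAt (hIo.mem_nhds (hwmem t ht))).comp t (hwT t ht)).sub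
        ((hwT t ht).mul contDiffAt_id)).contDiffWithinAt
    · intro x hx
      simp [hwleft x hx]
    · -- the ODE for v
      intro t ht
      -- first derivative on the image
      have hv1 : ∀ s ∈ deriv u '' I, deriv (fun y => u (w y) - w y * y) s = -(w s) := by
        intro s hs
        have hw' : HasDerivAt w (deriv (deriv u) (w s))⁻¹ s := (hwderiv s hs).hasDerivAt
        have hu' : HasDerivAt u s (w s) := by
          have := ((husm.contDiffAt (hIo.mem_nhds (hwmem s hs))).differentiableAt (by simp)).hasDerivAt
          rwa [hwright s hs] at this
        have h1 : HasDerivAt (fun y => u (w y)) (s * (deriv (deriv u) (w s))⁻¹) s :=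
          HasDerivAt.comp s hu' hw'
        have h2 : HasDerivAt (fun y => w y * y)
            ((deriv (deriv u) (w s))⁻¹ * s + w s * 1) s := hw'.mul (hasDerivAt_id s)
        have hv : HasDerivAt (fun y => u (w y) - w y * y) (-(w s)) s := by
          have := h1.sub h2
          exact this.congr_deriv (by ring)
        exact hv.deriv
      have hv2 : ∀ s ∈ deriv u '' I,
          deriv (deriv (fun y => u (w y) - w y * y)) s = -(deriv (deriv u) (w s))⁻¹ := by
        intro s hs
        have hEv : deriv (fun y => u (w y) - w y * y) =ᶠ[nhds s] fun y => -(w y) :=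
          Filter.eventually_of_mem (hopen.mem_nhds hs) (fun z hz => hv1 z hz)
        rw [hEv.deriv_eq]
        exact (((hwderiv s hs).hasDerivAt).neg).deriv
      -- third derivative at t
      have hEv2 : deriv (deriv (fun y => u (w y) - w y * y)) =ᶠ[nhds t]
          fun y => -(deriv (deriv u) (w y))⁻¹ :=
        Filter.eventually_of_mem (hopen.mem_nhds ht) (fun z hz => hv2 z hz)
      rw [hEv2.deriv_eq]
      set x := w t with hx
      have hxI : x ∈ I := hwmem t ht
      have hq0 : deriv (deriv u) x ≠ 0 := hq x hxI
      have hw' : HasDerivAt w (deriv (deriv u) x)⁻¹ t := (hwderiv t ht).hasDerivAt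
      have hh : HasDerivAt (fun y => deriv (deriv u) (w y))
          (deriv (deriv (deriv u)) x * (deriv (deriv u) x)⁻¹) t :=
        by have h2d := ((hg2sm.contDiffAt (hIo.mem_nhds hxI)).differentiableAt (by simp)).hasDerivAt
           exact HasDerivAt.comp t h2d hw'
      have hfin : HasDerivAt (fun y => -(deriv (deriv u) (w y))⁻¹)
          (deriv (deriv (deriv u)) x * (deriv (deriv u) x)⁻¹ / (deriv (deriv u) x)^2) t := by
        have := (hh.inv (by rw [← hx]; exact hq0)).neg
        exact this.congr_deriv (by
        rw [← hx]; ring)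
      have h3 := hode x hxI
      have hpt : deriv u x = t := hwright t ht
      rw [hfin.deriv]
      rw [h3]
      rw [hpt]
      beta_reduce
      rw [← hx]
      field_simp
      ring
end
end
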